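/- For the rotation flow φ(t, x) = x + π(αt) on the circle ℝ/ℤ with α ≠ 0, the exponent group of any orbit equals ℤα, the cyclic subgroup of ℝ generated by α. -/

import Mathlib

open Filter Topology

noncomputable def expGroup {X : Type*} [MetricSpace X] (f : ℝ → X) : Set ℝ :=
  {α : ℝ | ∀ t : ℕ → ℝ, (∃ x : X, Tendsto (fun i => f (t i)) atTop (nhds x)) →
      ∃ ξ : UnitAddCircle, Tendsto (fun i => ((α * t i : ℝ) : UnitAddCircle)) atTop (nhds ξ)}

theorem exponents_rotation_flow (α : ℝ) (hα : α ≠ 0) (p : UnitAddCircle) :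
    expGroup (fun t : ℝ => p + ((α * t : ℝ) : UnitAddCircle))
      = {β : ℝ | ∃ n : ℤ, β = n * α} := by
  ext β
  constructor
  · intro hβ
    obtain ⟨ξ, hξ⟩ := hβ (fun i : ℕ => (i : ℝ) / α) ⟨p, by
      have : (fun i : ℕ => p + ((α * ((i : ℝ) / α) : ℝ) : UnitAddCircle)) = fun i : ℕ => p := by
        funext i
        have h1 : α * ((i : ℝ) / α) = (i : ℝ) := mul_div_cancel₀ _ hα
        rw [h1]
        have : (((i : ℝ)) : UnitAddCircle) = 0 := by
          rw [AddCircle.coe_eq_zero_iff]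
          exact ⟨(i : ℤ), by simp⟩
        rw [this, add_zero]
      rw [this]
      exact tendsto_const_nhds⟩
    set γ : ℝ := β / α with hγ
    have hfun : (fun i : ℕ => ((β * ((i : ℝ) / α) : ℝ) : UnitAddCircle))
        = fun i : ℕ => ((γ * (i : ℝ) : ℝ) : UnitAddCircle) := by
      funext i; congr 1; rw [hγ]; ring
    rw [hfun] at hξ
    have h2 : Tendsto (fun i : ℕ => ((γ * ((i : ℝ) + 1) : ℝ) : UnitAddCircle)) atTop (nhds ξ) := by
      have h := hξ.comp (tendsto_add_atTop_nat 1)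
      exact h.congr fun i => by simp [Function.comp]
    have h3 : Tendsto (fun i : ℕ => ((γ * ((i : ℝ) + 1) : ℝ) : UnitAddCircle)
        - ((γ * (i : ℝ) : ℝ) : UnitAddCircle)) atTop (nhds (ξ - ξ)) := h2.sub hξ
    have h4 : (fun i : ℕ => ((γ * ((i : ℝ) + 1) : ℝ) : UnitAddCircle)
        - ((γ * (i : ℝ) : ℝ) : UnitAddCircle)) = fun _ : ℕ => ((γ : ℝ) : UnitAddCircle) := by
      funext i
      rw [← AddCircle.coe_sub]
      congr 1
      ring
    rw [h4, sub_self] at h3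
    have h5 : ((γ : ℝ) : UnitAddCircle) = 0 := tendsto_nhds_unique tendsto_const_nhds h3
    rw [AddCircle.coe_eq_zero_iff] at h5
    obtain ⟨n, hn⟩ := h5
    refine ⟨n, ?_⟩
    have : γ = (n : ℝ) := by rw [← hn]; simp
    rw [hγ, div_eq_iff hα] at this
    linarith [this]
  · rintro ⟨n, rfl⟩ t ⟨x, hx⟩
    have hπ : Tendsto (fun i => ((α * t i : ℝ) : UnitAddCircle)) atTop (nhds (x - p)) := by
      have : (fun i => ((α * t i : ℝ) : UnitAddCircle))
          = fun i => (p + ((α * t i : ℝ) : UnitAddCircle)) - p := by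
        funext i; abel
      rw [this]
      exact hx.sub_const p
    refine ⟨n • (x - p), ?_⟩
    have hc : Continuous fun z : UnitAddCircle => n • z := continuous_zsmul n
    have := (hc.tendsto _).comp hπ
    convert this using 2 with i
    show (((n : ℝ) * α * t i : ℝ) : UnitAddCircle) = n • ((α * t i : ℝ) : UnitAddCircle)
    rw [← AddCircle.coe_zsmul]
    congr 1
    rw [zsmul_eq_mul]
    ring
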